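/- Let S be a C0-semigroup on a Banach space E, μ_t a family of Borel probability measures on E, and define the Ornstein–Uhlenbeck operators P(t)f(x) := ∫_E f(S(t)x + y) dμ_t(y) on BUC(E). If V_n : BUC(E) → BUC(E) are the isometries V_n f(x) := f(x/n), then for every f ∈ BUC(E) and every t ≥ 0, lim_{n→∞} ‖V_n^{-1} P(t) V_n f - R(t)f‖_∞ = 0, where R(t)f := f ∘ S(t). -/

import Mathlib

open Filter Topology MeasureTheory

/-- Let `S` be a `C₀`-semigroup on a Banach space `E`, `μ t` Borel probability measures,
and `P(t)f(x) = ∫ f(S(t)x + y) dμ_t(y)` the Ornstein–Uhlenbeck operators on `BUC(E)`.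
With the isometries `Vₙ f(x) = f(x/n)`, for every `f ∈ BUC(E)` and `t ≥ 0`:
`‖Vₙ⁻¹ P(t) Vₙ f - R(t) f‖_∞ → 0` as `n → ∞`, where
`(Vₙ⁻¹ P(t) Vₙ f)(x) = ∫ f(n⁻¹(S(t)(n x) + y)) dμ_t(y)` and `R(t)f = f ∘ S(t)`. -/
theorem stmt11 {E : Type*} [NormedAddCommGroup E] [NormedSpace ℝ E] [CompleteSpace E]
    [MeasurableSpace E] [BorelSpace E]
    (S : ℝ → E →L[ℝ] E)
    (hS0 : S 0 = 1)
    (hSadd : ∀ t ≥ (0:ℝ), ∀ u ≥ (0:ℝ), S (t + u) = (S t).comp (S u))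
    (hScont : ∀ x : E, ContinuousOn (fun r => S r x) (Set.Ici (0:ℝ)))
    (μ : ℝ → Measure E) (hμ : ∀ r, IsProbabilityMeasure (μ r))
    (f : E → ℝ) (hfu : UniformContinuous f) (hfb : ∃ C, ∀ x, |f x| ≤ C)
    (t : ℝ) (ht : 0 ≤ t) :
    Tendsto (fun n : ℕ => ⨆ x : E,
        |(∫ y, f ((n : ℝ)⁻¹ • (S t ((n : ℝ) • x) + y)) ∂(μ t)) - f (S t x)|)
      atTop (𝓝 0) := by
  obtain ⟨C, hC⟩ := hfb
  have hC0 : 0 ≤ C := (abs_nonneg (f 0)).trans (hC 0)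
  haveI := hμ t
  rw [Metric.tendsto_atTop]
  intro ε hε
  obtain ⟨δ, hδ, hδ'⟩ := Metric.uniformContinuous_iff.mp hfu (ε/4) (by linarith)
  set A : ℕ → Set E := fun n => {y | (n:ℝ) * δ ≤ ‖y‖} with hA
  have hAclosed : ∀ n, IsClosed (A n) := fun n =>
    isClosed_le continuous_const continuous_norm
  have hAanti : Antitone A := by
    intro n m hnm y hy
    have h1 : (n:ℝ) ≤ m := Nat.cast_le.mpr hnm
    have : (n:ℝ) * δ ≤ (m:ℝ) * δ := by nlinarith [hδ.le]
    exact le_trans this hy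
  have hAempty : ⋂ n, A n = ∅ := by
    ext y
    simp only [Set.mem_iInter, Set.mem_empty_iff_false, iff_false, not_forall]
    obtain ⟨n, hn⟩ := exists_nat_gt (‖y‖ / δ)
    refine ⟨n, ?_⟩
    simp only [hA, Set.mem_setOf_eq, not_le]
    rw [div_lt_iff₀ hδ] at hn
    linarith
  have htend : Tendsto (fun n => μ t (A n)) atTop (𝓝 0) := by
    have := MeasureTheory.tendsto_measure_iInter_atTop (μ := μ t)
      (fun n => (hAclosed n).measurableSet.nullMeasurableSet) hAanti
      ⟨0, measure_ne_top _ _⟩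
    rwa [hAempty, measure_empty] at this
  have htend' : Tendsto (fun n => 2 * C * (μ t (A n)).toReal) atTop (𝓝 0) := by
    have h1 : Tendsto (fun n => (μ t (A n)).toReal) atTop (𝓝 0) := by
      have := (ENNReal.tendsto_toReal ENNReal.zero_ne_top).comp htend
      exact this
    simpa using h1.const_mul (2 * C)
  obtain ⟨N, hN⟩ := Filter.eventually_atTop.mp
    (htend'.eventually_lt_const (show (0:ℝ) < ε/4 by linarith))
  refine ⟨max N 1, fun n hn => ?_⟩
  have hn1 : 1 ≤ n := le_trans (le_max_right N 1) hn
  have hnN : N ≤ n := le_trans (le_max_left N 1) hn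
  have hnR : (0:ℝ) < n := by exact_mod_cast hn1
  have key : ∀ x : E, |(∫ y, f ((n:ℝ)⁻¹ • (S t ((n:ℝ) • x) + y)) ∂(μ t)) - f (S t x)| ≤ ε/2 := by
    intro x
    have hrw : ∀ y : E, (n:ℝ)⁻¹ • (S t ((n:ℝ) • x) + y) = S t x + (n:ℝ)⁻¹ • y := by
      intro y
      rw [_root_.map_smul, smul_add, smul_smul, inv_mul_cancel₀ hnR.ne', one_smul]
    simp only [hrw]
    have hfc : Continuous f := hfu.continuous
    have hint : Integrable (fun y => f (S t x + (n:ℝ)⁻¹ • y)) (μ t) := by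
      refine (integrable_const C).mono' ?_ (ae_of_all _ fun y => ?_)
      · exact (hfc.comp (continuous_const.add (continuous_const_smul _))).aestronglyMeasurable
      · simpa using hC _
    have hindint : Integrable ((A n).indicator (fun _ => 2*C)) (μ t) :=
      (integrable_const (2*C)).indicator (hAclosed n).measurableSet
    have h1 : (∫ y, f (S t x + (n:ℝ)⁻¹ • y) ∂(μ t)) - f (S t x)
        = ∫ y, (f (S t x + (n:ℝ)⁻¹ • y) - f (S t x)) ∂(μ t) := by
      rw [integral_sub hint (integrable_const _), integral_const]
      simp
    rw [h1]
    have hbound : ∀ y, |f (S t x + (n:ℝ)⁻¹ • y) - f (S t x)|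
        ≤ ε/4 + (A n).indicator (fun _ => 2*C) y := by
      intro y
      by_cases hy : y ∈ A n
      · rw [Set.indicator_of_mem hy]
        have h2 : |f (S t x + (n:ℝ)⁻¹ • y) - f (S t x)|
            ≤ |f (S t x + (n:ℝ)⁻¹ • y)| + |f (S t x)| := abs_sub _ _
        have := hC (S t x + (n:ℝ)⁻¹ • y)
        have := hC (S t x)
        linarith
      · rw [Set.indicator_of_notMem hy]
        have hyn : ‖(n:ℝ)⁻¹ • y‖ < δ := by
          rw [norm_smul, norm_inv, Real.norm_natCast]
          simp only [hA, Set.mem_setOf_eq, not_le] at hy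
          rw [inv_mul_lt_iff₀ hnR]
          linarith
        have h3 := hδ' (a := S t x + (n:ℝ)⁻¹ • y) (b := S t x) (by
          rw [dist_eq_norm]; simpa using hyn)
        rw [Real.dist_eq] at h3
        linarith
    calc |∫ y, (f (S t x + (n:ℝ)⁻¹ • y) - f (S t x)) ∂(μ t)|
        ≤ ∫ y, |f (S t x + (n:ℝ)⁻¹ • y) - f (S t x)| ∂(μ t) :=
          by simpa [Real.norm_eq_abs] using
            norm_integral_le_integral_norm (μ := μ t)
              (fun y => f (S t x + (n:ℝ)⁻¹ • y) - f (S t x))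
      _ ≤ ∫ y, (ε/4 + (A n).indicator (fun _ => 2*C) y) ∂(μ t) :=
          integral_mono_of_nonneg (ae_of_all _ fun y => abs_nonneg _)
            ((integrable_const _).add hindint) (ae_of_all _ hbound)
      _ = ε/4 + 2*C*(μ t (A n)).toReal := by
          rw [integral_add (integrable_const _) hindint, integral_const,
            integral_indicator_const _ (hAclosed n).measurableSet]
          simp [mul_comm, measureReal_def]
      _ ≤ ε/2 := by
          have := hN n hnN
          linarith
  have hsup_le : (⨆ x : E, |(∫ y, f ((n:ℝ)⁻¹ • (S t ((n:ℝ) • x) + y)) ∂(μ t)) - f (S t x)|) ≤ ε/2 :=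
    ciSup_le key
  have hsup_nonneg : 0 ≤ ⨆ x : E, |(∫ y, f ((n:ℝ)⁻¹ • (S t ((n:ℝ) • x) + y)) ∂(μ t)) - f (S t x)| :=
    Real.iSup_nonneg fun x => abs_nonneg _
  rw [Real.dist_eq, sub_zero, abs_of_nonneg hsup_nonneg]
  linarith
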